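/- Let f be a valuative matroid invariant on rank-r matroids on {1,...,n} that is additive (f(M) = 0 whenever M is disconnected). If M is a sparse paving matroid whose polytope appears in a matroid subdivision of the hypersimplex P(U_{r,n}) together with k facets that are polytopes of matroids isomorphic to T_{r,n}, then f(M) = f(U_{r,n}) - k·f(T_{r,n}). -/

import Mathlib

open Matroid

/-- The matroid base polytope: the convex hull in `ℝ^ℕ` of the indicator vectors of the
bases of `M`. -/
def basePolytope (M : Matroid ℕ) : Set (ℕ → ℝ) :=
  convexHull ℝ {x | ∃ B : Set ℕ, M.IsBase B ∧ x = B.indicator 1}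

/-- `M` decomposes as the direct sum of its restrictions to `A` and `B`, where `A, B` is a
partition of the ground set into two nonempty parts. -/
def IsDirectSumDecomp (M : Matroid ℕ) (A B : Set ℕ) : Prop :=
  A.Nonempty ∧ B.Nonempty ∧ Disjoint A B ∧ A ∪ B = M.E ∧
    ∀ I ⊆ M.E, (M.Indep I ↔ M.Indep (I ∩ A) ∧ M.Indep (I ∩ B))

/-- A circuit of `M`: a minimal dependent set. -/
def IsCircuitE (M : Matroid ℕ) (C : Set ℕ) : Prop := Minimal M.Dep C

section SPAux

open Set
open scoped Classical

/-- The indicator vector of a set, as a point of `ℝ^ℕ`. -/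
noncomputable abbrev spInd (B : Set ℕ) : ℕ → ℝ := B.indicator 1

/-- The vertex set of the base polytope of `N`. -/
def spV (N : Matroid ℕ) : Set (ℕ → ℝ) := {x | ∃ B : Set ℕ, N.IsBase B ∧ x = B.indicator 1}

lemma basePolytope_eq_hull (N : Matroid ℕ) : basePolytope N = convexHull ℝ (spV N) := rfl

lemma spInd_exchange {X : Set ℕ} {a b : ℕ} (ha : a ∈ X) (hb : b ∉ X) :
    spInd X - spInd (insert b (X \ {a})) = spInd {a} - spInd {b} := by
  have hab : a ≠ b := fun h => hb (h ▸ ha)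
  funext j
  have hap : ∀ B : Set ℕ, spInd B j = if j ∈ B then (1:ℝ) else 0 := fun B => by
    simp [spInd, Set.indicator_apply]
  simp only [Pi.sub_apply, hap, Set.mem_insert_iff, Set.mem_diff, Set.mem_singleton_iff]
  by_cases hja : j = a <;> by_cases hjb : j = b <;> subst_vars <;> simp_all

lemma spSum_ind (n : ℕ) (B : Set ℕ) (hB : B ⊆ Set.Icc 1 n) :
    ∑ j ∈ Finset.Icc 1 n, spInd B j = (B.ncard : ℝ) := by
  have hBf : B.Finite := (Set.finite_Icc 1 n).subset hB
  have h2 : (Finset.Icc 1 n).filter (· ∈ B) = hBf.toFinset := by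
    ext j
    simp only [Finset.mem_filter, Finset.mem_Icc, Set.Finite.mem_toFinset]
    exact ⟨fun h => h.2, fun h => ⟨by simpa [Set.mem_Icc] using hB h, h⟩⟩
  rw [show (∑ j ∈ Finset.Icc 1 n, spInd B j) = ∑ j ∈ Finset.Icc 1 n, if j ∈ B then (1:ℝ) else 0
      from Finset.sum_congr rfl fun j _ => by simp [spInd, Set.indicator_apply]]
  rw [Finset.sum_boole, h2, Set.ncard_eq_toFinset_card B hBf]

lemma spSum_hull (n : ℕ) (r : ℝ) (S : Set (ℕ → ℝ))
    (hS : ∀ x ∈ S, ∑ j ∈ Finset.Icc 1 n, x j = r) :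
    ∀ x ∈ convexHull ℝ S, ∑ j ∈ Finset.Icc 1 n, x j = r := by
  have hconv : Convex ℝ {x : ℕ → ℝ | ∑ j ∈ Finset.Icc 1 n, x j = r} := by
    intro x hx y hy a b ha hb hab
    simp only [Set.mem_setOf_eq] at *
    simp only [Pi.add_apply, Pi.smul_apply, smul_eq_mul]
    rw [Finset.sum_add_distrib, ← Finset.mul_sum, ← Finset.mul_sum, hx, hy, ← add_mul, hab,
      one_mul]
  exact convexHull_min hS hconv

lemma sp_weights_mem (V : Finset (ℕ → ℝ)) (w : (ℕ → ℝ) → ℝ)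
    (h0 : ∀ v ∈ V, 0 ≤ w v) (h1 : ∑ v ∈ V, w v = 1) :
    ∑ v ∈ V, w v • v ∈ convexHull ℝ (V : Set (ℕ → ℝ)) :=
  (convex_convexHull ℝ _).sum_mem h0 h1 fun v hv => subset_convexHull ℝ _ hv

lemma sp_centroid_interior (V : Finset (ℕ → ℝ)) (hV : V.Nonempty)
    {d : ℕ → ℝ} (hd : d ∈ vectorSpan ℝ (V : Set (ℕ → ℝ))) :
    ∃ ε : ℝ, 0 < ε ∧ ∀ t : ℝ, |t| ≤ ε →
      ((V.card : ℝ)⁻¹ • ∑ v ∈ V, v) + t • d ∈ convexHull ℝ (V : Set (ℕ → ℝ)) := by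
  set x : ℕ → ℝ := (V.card : ℝ)⁻¹ • ∑ v ∈ V, v with hx
  have hcard : (0:ℝ) < (V.card : ℝ) := by exact_mod_cast Finset.card_pos.mpr hV
  have hxmem : x ∈ convexHull ℝ (V : Set (ℕ → ℝ)) := by
    have := sp_weights_mem V (fun _ => (V.card : ℝ)⁻¹) (fun v _ => by positivity)
      (by rw [Finset.sum_const, nsmul_eq_mul, mul_inv_cancel₀ hcard.ne'])
    rw [hx, Finset.smul_sum]
    simpa using this
  induction hd using Submodule.span_induction with
  | mem g hg =>
    obtain ⟨v, hv, w, hw, rfl⟩ := Set.mem_vsub.mp hg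
    have hv' : v ∈ V := hv
    have hw' : w ∈ V := hw
    refine ⟨(V.card : ℝ)⁻¹, by positivity, fun t ht => ?_⟩
    have key : x + t • (v -ᵥ w) =
        ∑ u ∈ V, ((V.card : ℝ)⁻¹ +
          t * ((if u = v then (1:ℝ) else 0) - if u = w then 1 else 0)) • u := by
      simp only [add_smul, sub_smul, mul_smul, ite_smul, one_smul, zero_smul,
        Finset.sum_add_distrib]
      rw [← Finset.smul_sum (r := t), Finset.sum_sub_distrib, Finset.sum_ite_eq' V v (fun u => u),
        Finset.sum_ite_eq' V w (fun u => u), if_pos hv', if_pos hw', ← Finset.smul_sum, ← hx,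
        vsub_eq_sub]
    rw [key]
    apply sp_weights_mem
    · intro u hu
      have h1 : -1 ≤ ((if u = v then (1:ℝ) else 0) - if u = w then 1 else 0) := by
        split_ifs <;> norm_num
      have h2 : ((if u = v then (1:ℝ) else 0) - if u = w then 1 else 0) ≤ 1 := by
        split_ifs <;> norm_num
      obtain ⟨hl, hr⟩ := abs_le.mp ht
      nlinarith
    · rw [Finset.sum_add_distrib, Finset.sum_const, nsmul_eq_mul, mul_inv_cancel₀ hcard.ne',
        ← Finset.mul_sum, Finset.sum_sub_distrib,
        Finset.sum_ite_eq' V v (fun _ => (1:ℝ)), Finset.sum_ite_eq' V w (fun _ => (1:ℝ))]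
      simp [hv', hw']
  | zero => exact ⟨1, one_pos, fun t _ => by rw [smul_zero, add_zero]; exact hxmem⟩
  | add d1 d2 hd1 hd2 ih1 ih2 =>
    obtain ⟨e1, he1, H1⟩ := ih1
    obtain ⟨e2, he2, H2⟩ := ih2
    refine ⟨min e1 e2 / 2, by positivity, fun t ht => ?_⟩
    have habs : (0:ℝ) ≤ |t| := abs_nonneg t
    have h1 : |2*t| ≤ e1 := by
      rw [abs_mul, abs_two]
      nlinarith [min_le_left e1 e2]
    have h2 : |2*t| ≤ e2 := by
      rw [abs_mul, abs_two]
      nlinarith [min_le_right e1 e2]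
    have := (convex_convexHull ℝ (V : Set (ℕ → ℝ))) (H1 _ h1) (H2 _ h2)
      (by norm_num : (0:ℝ) ≤ 1/2) (by norm_num : (0:ℝ) ≤ 1/2) (by norm_num)
    convert this using 1
    module
  | smul c d hdm ih =>
    obtain ⟨ε, hε, H⟩ := ih
    rcases eq_or_ne c 0 with rfl | hc
    · exact ⟨1, one_pos, fun t _ => by rw [zero_smul, smul_zero, add_zero]; exact hxmem⟩
    · refine ⟨ε / |c|, by positivity, fun t ht => ?_⟩
      have habs : |t * c| ≤ ε := by
        rw [abs_mul]
        rw [div_eq_mul_inv] at ht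
        calc |t| * |c| ≤ ε * |c|⁻¹ * |c| := mul_le_mul_of_nonneg_right ht (abs_nonneg c)
          _ = ε := by field_simp
      have := H (t * c) habs
      rwa [mul_smul] at this

lemma sp_ind_diff_mem (n : ℕ) (W : Submodule ℝ (ℕ → ℝ))
    (hgen : ∀ a ∈ Set.Icc 1 n, ∀ b ∈ Set.Icc 1 n, spInd {a} - spInd {b} ∈ W) :
    ∀ (m : ℕ) (X Y : Set ℕ), X ⊆ Set.Icc 1 n → Y ⊆ Set.Icc 1 n → X.ncard = Y.ncard →
      (X \ Y).ncard = m → spInd X - spInd Y ∈ W := by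
  intro m
  induction m using Nat.strong_induction_on with
  | _ m ih =>
    intro X Y hX hY hcard hm
    have hXf : X.Finite := (Set.finite_Icc 1 n).subset hX
    have hYf : Y.Finite := (Set.finite_Icc 1 n).subset hY
    rcases Set.eq_empty_or_nonempty (X \ Y) with hemp | ⟨a, ha⟩
    · have : X = Y := Set.eq_of_subset_of_ncard_le (diff_eq_empty.mp hemp) hcard.ge hYf
      rw [this, sub_self]; exact W.zero_mem
    · have hYX : (Y \ X).Nonempty := by
        rcases Set.eq_empty_or_nonempty (Y \ X) with h | h
        · exfalso
          have : Y = X := Set.eq_of_subset_of_ncard_le (diff_eq_empty.mp h) hcard.le hXf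
          exact ha.2 (this ▸ ha.1)
        · exact h
      obtain ⟨b, hb⟩ := hYX
      set X' := insert b (X \ {a}) with hX'
      have hbX : b ∉ X := hb.2
      have hX'sub : X' ⊆ Set.Icc 1 n := by
        rw [hX']
        exact insert_subset (hY hb.1) ((diff_subset.trans hX))
      have hX'card : X'.ncard = Y.ncard := by
        rw [hX', Set.ncard_insert_of_notMem (fun h => hbX h.1) (hXf.diff),
          ← hcard]
        have := Set.ncard_diff_singleton_add_one ha.1 hXf
        omega
      have hX'diff : X' \ Y = (X \ Y) \ {a} := by
        ext j
        simp only [hX', Set.mem_diff, Set.mem_insert_iff, Set.mem_singleton_iff]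
        constructor
        · rintro ⟨rfl | ⟨hj1, hj2⟩, hjY⟩
          · exact absurd hb.1 hjY
          · exact ⟨⟨hj1, hjY⟩, hj2⟩
        · rintro ⟨⟨hj1, hjY⟩, hj2⟩
          exact ⟨Or.inr ⟨hj1, hj2⟩, hjY⟩
      have hlt : ((X \ Y) \ {a}).ncard < m := by
        have := Set.ncard_diff_singleton_add_one ha (hXf.diff)
        omega
      have hrest : spInd X' - spInd Y ∈ W :=
        ih _ hlt X' Y hX'sub hY hX'card (by rw [hX'diff])
      have heq : spInd X - spInd Y = (spInd X - spInd X') + (spInd X' - spInd Y) := by abel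
      rw [heq]
      exact W.add_mem (by
        rw [spInd_exchange ha.1 hbX]
        exact hgen a (hX ha.1) b (hY hb.1)) hrest

lemma sp_exchange_connected (N : Matroid ℕ) (n : ℕ) (hE : N.E = Set.Icc 1 n)
    (hno : ¬ ∃ A B, IsDirectSumDecomp N A B) :
    ∀ a ∈ N.E, ∀ b ∈ N.E, spInd {a} - spInd {b} ∈ vectorSpan ℝ (spV N) := by
  set W := vectorSpan ℝ (spV N) with hW
  have hEfin : N.E.Finite := hE ▸ Set.finite_Icc 1 n
  by_contra hcon
  push_neg at hcon
  obtain ⟨a0, ha0, b0, hb0, hb0n⟩ := hcon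
  set A : Set ℕ := {c | c ∈ N.E ∧ spInd {a0} - spInd {c} ∈ W} with hA
  set B : Set ℕ := N.E \ A with hB
  have hAE : A ⊆ N.E := fun c hc => hc.1
  have hBE : B ⊆ N.E := diff_subset
  have hexch : ∀ (B1 : Set ℕ) (e fe : ℕ), N.IsBase B1 → e ∈ B1 → fe ∉ B1 →
      N.IsBase (insert fe (B1 \ {e})) → spInd {e} - spInd {fe} ∈ W := by
    intro B1 e fe h1 he hf h2
    have : spInd B1 - spInd (insert fe (B1 \ {e})) ∈ W := by
      rw [hW, vectorSpan_def]
      exact Submodule.subset_span (Set.vsub_mem_vsub ⟨B1, h1, rfl⟩ ⟨_, h2, rfl⟩)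
    rwa [spInd_exchange he hf] at this
  have hsame : ∀ c ∈ N.E, ∀ d ∈ N.E, spInd {c} - spInd {d} ∈ W → (c ∈ A ↔ d ∈ A) := by
    intro c hc d hd hcd
    constructor
    · intro hcA
      exact ⟨hd, by
        have := W.add_mem hcA.2 hcd
        simpa [sub_add_sub_cancel] using this⟩
    · intro hdA
      exact ⟨hc, by
        have := W.add_mem hdA.2 (W.neg_mem hcd)
        simp only [neg_sub] at this
        simpa [sub_add_sub_cancel] using this⟩
  have hbfin : ∀ B1, N.IsBase B1 → B1.Finite := fun B1 h => hEfin.subset h.subset_ground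
  have K1 : ∀ m (B1 B2 : Set ℕ), N.IsBase B1 → N.IsBase B2 → (B1 \ B2).ncard = m →
      (B1 ∩ A).ncard = (B2 ∩ A).ncard := by
    intro m
    induction m using Nat.strong_induction_on with
    | _ m ih =>
      intro B1 B2 h1 h2 hm
      rcases Set.eq_empty_or_nonempty (B1 \ B2) with hemp | ⟨e, he⟩
      · rw [h1.eq_of_subset_isBase h2 (diff_eq_empty.mp hemp)]
      · obtain ⟨fe, hfe, hB'⟩ := h1.exchange h2 he
        set B1' := insert fe (B1 \ {e}) with hB1'
        have hrel : spInd {e} - spInd {fe} ∈ W := hexch B1 e fe h1 he.1 hfe.2 hB'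
        have heA : e ∈ A ↔ fe ∈ A :=
          hsame e (h1.subset_ground he.1) fe (h2.subset_ground hfe.1) hrel
        have hfin1 : (B1 ∩ A).Finite := (hbfin B1 h1).subset inter_subset_left
        have hstep : (B1' ∩ A).ncard = (B1 ∩ A).ncard := by
          by_cases heAA : e ∈ A
          · have hfeA : fe ∈ A := heA.mp heAA
            have hset : B1' ∩ A = insert fe ((B1 ∩ A) \ {e}) := by
              ext j
              simp only [hB1', Set.mem_inter_iff, Set.mem_insert_iff, Set.mem_diff,
                Set.mem_singleton_iff]
              constructor
              · rintro ⟨h | ⟨hj1, hj2⟩, hjA⟩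
                · exact Or.inl h
                · exact Or.inr ⟨⟨hj1, hjA⟩, hj2⟩
              · rintro (rfl | ⟨⟨hj1, hjA⟩, hj2⟩)
                · exact ⟨Or.inl rfl, hfeA⟩
                · exact ⟨Or.inr ⟨hj1, hj2⟩, hjA⟩
            rw [hset, Set.ncard_insert_of_notMem (fun h => hfe.2 h.1.1) (hfin1.diff)]
            have := Set.ncard_diff_singleton_add_one (show e ∈ B1 ∩ A from ⟨he.1, heAA⟩) hfin1
            omega
          · have hfeA : fe ∉ A := fun h => heAA (heA.mpr h)
            have hset : B1' ∩ A = B1 ∩ A := by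
              ext j
              simp only [hB1', Set.mem_inter_iff, Set.mem_insert_iff, Set.mem_diff,
                Set.mem_singleton_iff]
              constructor
              · rintro ⟨h | ⟨hj1, hj2⟩, hjA⟩
                · exact absurd (h ▸ hjA) hfeA
                · exact ⟨hj1, hjA⟩
              · rintro ⟨hj1, hjA⟩
                refine ⟨Or.inr ⟨hj1, fun h => heAA (h ▸ hjA)⟩, hjA⟩
            rw [hset]
        have hdiff : B1' \ B2 = (B1 \ B2) \ {e} := by
          ext j
          simp only [hB1', Set.mem_diff, Set.mem_insert_iff, Set.mem_singleton_iff]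
          constructor
          · rintro ⟨rfl | ⟨hj1, hj2⟩, hjB2⟩
            · exact absurd hfe.1 hjB2
            · exact ⟨⟨hj1, hjB2⟩, hj2⟩
          · rintro ⟨⟨hj1, hjB2⟩, hj2⟩
            exact ⟨Or.inr ⟨hj1, hj2⟩, hjB2⟩
        have hfind : (B1 \ B2).Finite := (hbfin B1 h1).diff
        have hlt : ((B1 \ B2) \ {e}).ncard < m := by
          have h2' := Set.ncard_diff_singleton_add_one he hfind
          omega
        rw [← hstep]
        exact ih _ hlt B1' B2 hB' h2 (by rw [hdiff])
  obtain ⟨B00, hB00⟩ := N.exists_isBase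
  have hAB : A ∪ B = N.E := Set.union_diff_cancel hAE
  have hdisjAB : Disjoint A B := Set.disjoint_sdiff_right
  have hsplit : ∀ B1, N.IsBase B1 → (B1 ∩ A).ncard + (B1 ∩ B).ncard = B1.ncard := by
    intro B1 h1
    have hun : B1 ∩ A ∪ B1 ∩ B = B1 := by
      rw [← Set.inter_union_distrib_left, hAB]
      exact Set.inter_eq_self_of_subset_left h1.subset_ground
    have hd : Disjoint (B1 ∩ A) (B1 ∩ B) :=
      hdisjAB.mono inter_subset_right inter_subset_right
    conv_rhs => rw [← hun]
    rw [Set.ncard_union_eq hd ((hbfin B1 h1).subset inter_subset_left)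
      ((hbfin B1 h1).subset inter_subset_left)]
  have hbasis_eq : ∀ (J S : Set ℕ), S ⊆ N.E → N.IsBasis J S → ∃ B3, N.IsBase B3 ∧ J = B3 ∩ S := by
    intro J S hS hJ
    obtain ⟨B3, hB3, hJB3⟩ := hJ.indep.exists_isBase_superset
    exact ⟨B3, hB3, hJ.eq_of_subset_indep (hB3.indep.subset inter_subset_left)
      (subset_inter hJB3 hJ.subset) inter_subset_right⟩
  apply hno
  refine ⟨A, B, ⟨a0, ha0, by rw [sub_self]; exact W.zero_mem⟩,
    ⟨b0, hb0, fun h => hb0n h.2⟩, hdisjAB, hAB, fun I hI => ?_⟩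
  constructor
  · exact fun h => ⟨h.subset inter_subset_left, h.subset inter_subset_left⟩
  · rintro ⟨hIA, hIB⟩
    obtain ⟨JA, hJA, hIJA⟩ := hIA.subset_isBasis_of_subset inter_subset_right hAE
    obtain ⟨JB, hJB, hIJB⟩ := hIB.subset_isBasis_of_subset inter_subset_right hBE
    have hspan : N.Spanning (JA ∪ JB) := by
      constructor
      · apply subset_antisymm (N.closure_subset_ground _)
        intro c hc
        rcases (show c ∈ A ∪ B by rw [hAB]; exact hc) with h | h
        · exact N.closure_subset_closure subset_union_left (hJA.subset_closure h)
        · exact N.closure_subset_closure subset_union_right (hJB.subset_closure h)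
      · exact union_subset hJA.indep.subset_ground hJB.indep.subset_ground
    obtain ⟨B1, hB1, hB1sub⟩ := hspan.exists_isBase_subset
    obtain ⟨B3, hB3, hJAeq⟩ := hbasis_eq JA A hAE hJA
    obtain ⟨B4, hB4, hJBeq⟩ := hbasis_eq JB B hBE hJB
    have hJAc : JA.ncard = (B00 ∩ A).ncard := by
      rw [hJAeq]; exact K1 _ B3 B00 hB3 hB00 rfl
    have hJBc : JB.ncard = (B00 ∩ B).ncard := by
      rw [hJBeq]
      have h1 := hsplit B4 hB4
      have h2 := hsplit B00 hB00
      have h3 : (B4 ∩ A).ncard = (B00 ∩ A).ncard := K1 _ B4 B00 hB4 hB00 rfl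
      have h4 : B4.ncard = B00.ncard := hB4.ncard_eq_ncard_of_isBase hB00
      omega
    have hJAfin : JA.Finite := hEfin.subset hJA.indep.subset_ground
    have hJBfin : JB.Finite := hEfin.subset hJB.indep.subset_ground
    have hdisjJ : Disjoint JA JB := hdisjAB.mono hJA.subset hJB.subset
    have hcardU : (JA ∪ JB).ncard = B1.ncard := by
      rw [Set.ncard_union_eq hdisjJ hJAfin hJBfin, hJAc, hJBc, hsplit B00 hB00]
      exact hB00.ncard_eq_ncard_of_isBase hB1
    have hEq : B1 = JA ∪ JB :=
      Set.eq_of_subset_of_ncard_le hB1sub hcardU.le (hJAfin.union hJBfin)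
    have hindep : N.Indep (JA ∪ JB) := hEq ▸ hB1.indep
    apply hindep.subset
    intro c hcI
    rcases (show c ∈ A ∪ B by rw [hAB]; exact hI hcI) with h | h
    · exact Or.inl (hIJA ⟨hcI, h⟩)
    · exact Or.inr (hIJB ⟨hcI, h⟩)

/-- The key geometric lemma: if `N` is a connected matroid whose polytope lies in two
full-dimensional cells `P`, `Q` of a subdivision, then `P = Q`. -/
lemma sp_poly_eq (n r : ℕ) (U N : Matroid ℕ) (P Q : Set (ℕ → ℝ))
    (hUbase : ∀ B : Set ℕ, U.IsBase B ↔ B ⊆ Set.Icc 1 n ∧ B.encard = r)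
    (hNE : N.E = Set.Icc 1 n)
    (hno : ¬ ∃ A B, IsDirectSumDecomp N A B)
    (hNP : basePolytope N ⊆ P) (hNQ : basePolytope N ⊆ Q)
    (hPU : P ⊆ basePolytope U)
    (hPspan : affineSpan ℝ P = affineSpan ℝ (basePolytope U))
    (hQspan : affineSpan ℝ Q = affineSpan ℝ (basePolytope U))
    (hPext : IsExtreme ℝ P (P ∩ Q)) (hQext : IsExtreme ℝ Q (P ∩ Q)) :
    P = Q := by
  have hUvert : ∀ x ∈ spV U, ∑ j ∈ Finset.Icc 1 n, x j = (r : ℝ) := by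
    rintro x ⟨B, hB, rfl⟩
    obtain ⟨hBsub, hBcard⟩ := (hUbase B).mp hB
    have hncard : B.ncard = r := by rw [Set.ncard_def, hBcard, ENat.toNat_coe]
    rw [show (B.indicator 1 : ℕ → ℝ) = spInd B from rfl, spSum_ind n B hBsub, hncard]
  have hUhull : ∀ x ∈ basePolytope U, ∑ j ∈ Finset.Icc 1 n, x j = (r : ℝ) :=
    spSum_hull n r _ hUvert
  have hNbase : ∀ B, N.IsBase B → B ⊆ Set.Icc 1 n ∧ B.ncard = r := by
    intro B hB
    have hsub : B ⊆ Set.Icc 1 n := hNE ▸ hB.subset_ground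
    have hmem : spInd B ∈ basePolytope N := subset_convexHull ℝ _ ⟨B, hB, rfl⟩
    have := hUhull _ (hPU (hNP hmem))
    rw [spSum_ind n B hsub] at this
    exact ⟨hsub, by exact_mod_cast this⟩
  have hgen : ∀ a ∈ Set.Icc 1 n, ∀ b ∈ Set.Icc 1 n,
      spInd {a} - spInd {b} ∈ vectorSpan ℝ (spV N) := by
    have := sp_exchange_connected N n hNE hno
    rwa [hNE] at this
  obtain ⟨B0, hB0⟩ := N.exists_isBase
  have hvspan : vectorSpan ℝ (basePolytope N) = vectorSpan ℝ (spV N) := by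
    rw [← direction_affineSpan, ← direction_affineSpan, basePolytope_eq_hull,
      affineSpan_convexHull]
  have hspanN : affineSpan ℝ (basePolytope N) = affineSpan ℝ (basePolytope U) := by
    apply le_antisymm (affineSpan_mono ℝ (hNP.trans hPU))
    rw [basePolytope_eq_hull U, affineSpan_convexHull]
    apply affineSpan_le.mpr
    rintro v ⟨B', hB', rfl⟩
    obtain ⟨hB'sub, hB'card⟩ := (hUbase B').mp hB'
    have hB'ncard : B'.ncard = r := by rw [Set.ncard_def, hB'card, ENat.toNat_coe]
    have h0 : spInd B0 ∈ affineSpan ℝ (basePolytope N) :=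
      subset_affineSpan ℝ _ (subset_convexHull ℝ _ ⟨B0, hB0, rfl⟩)
    obtain ⟨hB0sub, hB0card⟩ := hNbase B0 hB0
    have hd : spInd B' - spInd B0 ∈ vectorSpan ℝ (spV N) :=
      sp_ind_diff_mem n _ hgen _ B' B0 hB'sub hB0sub (by rw [hB'ncard, hB0card]) rfl
    have := AffineSubspace.vadd_mem_of_mem_direction
      (by rw [direction_affineSpan, hvspan]; exact hd) h0
    simpa [vadd_eq_add, sub_add_cancel] using this
  -- the vertex set as a finset
  have hVfin : (spV N).Finite := by
    have h1 : {B : Set ℕ | N.IsBase B}.Finite :=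
      ((hNE ▸ Set.finite_Icc 1 n : N.E.Finite).finite_subsets).subset
        (fun B hB => hB.subset_ground)
    have h2 : spV N = (fun B : Set ℕ => spInd B) '' {B : Set ℕ | N.IsBase B} := by
      ext x
      constructor
      · rintro ⟨B, hB, rfl⟩; exact ⟨B, hB, rfl⟩
      · rintro ⟨B, hB, rfl⟩; exact ⟨B, hB, rfl⟩
    rw [h2]
    exact h1.image _
  set V : Finset (ℕ → ℝ) := hVfin.toFinset with hVdef
  have hVco : (V : Set (ℕ → ℝ)) = spV N := hVfin.coe_toFinset
  have hVne : V.Nonempty := hVfin.toFinset_nonempty.mpr ⟨spInd B0, B0, hB0, rfl⟩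
  set x : ℕ → ℝ := (V.card : ℝ)⁻¹ • ∑ v ∈ V, v with hxdef
  have hxhull : x ∈ convexHull ℝ (V : Set (ℕ → ℝ)) := by
    obtain ⟨ε, hε, H⟩ := sp_centroid_interior V hVne (Submodule.zero_mem _)
    have := H 0 (by simp [hε.le])
    simpa using this
  have hxN : x ∈ basePolytope N := by rw [basePolytope_eq_hull, ← hVco]; exact hxhull
  have key : ∀ R : Set (ℕ → ℝ), basePolytope N ⊆ R →
      affineSpan ℝ R = affineSpan ℝ (basePolytope U) →
      IsExtreme ℝ R (P ∩ Q) → R ⊆ P ∩ Q := by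
    intro R hNR hRspan hRext y hy
    have hyS : y ∈ affineSpan ℝ (basePolytope N) := by
      have : y ∈ affineSpan ℝ R := subset_affineSpan ℝ R hy
      rwa [hRspan, ← hspanN] at this
    have hxS : x ∈ affineSpan ℝ (basePolytope N) := subset_affineSpan ℝ _ hxN
    have hdir : y - x ∈ vectorSpan ℝ ((V : Set (ℕ → ℝ))) := by
      have := AffineSubspace.vsub_mem_direction hyS hxS
      rw [direction_affineSpan, hvspan, ← hVco] at this
      exact this
    obtain ⟨ε, hε, H⟩ := sp_centroid_interior V hVne hdir
    have hz : x + (-ε) • (y - x) ∈ convexHull ℝ (V : Set (ℕ → ℝ)) :=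
      H (-ε) (by rw [abs_neg, abs_of_pos hε])
    have hzN : x + (-ε) • (y - x) ∈ basePolytope N := by
      rw [basePolytope_eq_hull, ← hVco]; exact hz
    have hxPQ : x ∈ P ∩ Q := ⟨hNP hxN, hNQ hxN⟩
    have hseg : x ∈ openSegment ℝ y (x + (-ε) • (y - x)) := by
      refine ⟨ε / (1 + ε), 1 / (1 + ε), by positivity, by positivity, by field_simp; ring, ?_⟩
      have h1ε : (1 : ℝ) + ε ≠ 0 := by positivity
      match_scalars <;> field_simp <;> ring
    exact (hRext.2 hy (hNR hzN) hxPQ hseg)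
  exact subset_antisymm ((key P hNP hPspan hPext).trans inter_subset_right)
    ((key Q hNQ hQspan hQext).trans inter_subset_left)

end SPAux

theorem sparse_paving_subdivision_formula (n r k : ℕ) (hr : 0 < r) (hrn : r < n)
    (f : Matroid ℕ → ℤ) (U T M : Matroid ℕ)
    (hUE : U.E = Set.Icc 1 n)
    (hUbase : ∀ B : Set ℕ, U.IsBase B ↔ B ⊆ Set.Icc 1 n ∧ B.encard = r)
    (hTE : T.E = Set.Icc 1 n)
    (hTbase : ∀ B : Set ℕ, T.IsBase B ↔
      B ⊆ Set.Icc 1 n ∧ B.encard = r ∧ (B ∩ Set.Ioc r n).encard ≤ 1)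
    (hME : M.E = Set.Icc 1 n)
    (hMsparsepaving :
      (∀ C, IsCircuitE M C → C.encard = r ∨ C.encard = r + 1) ∧
      (∀ C, IsCircuitE M✶ C → C.encard = (n - r : ℕ) ∨ C.encard = (n - r : ℕ) + 1))
    (pieces : Fin (k + 1) → Matroid ℕ)
    (hpiece0 : pieces 0 = M)
    (hpieceE : ∀ i, (pieces i).E = Set.Icc 1 n)
    (hpieceT : ∀ i : Fin (k + 1), i ≠ 0 → ∃ σ : Equiv.Perm ℕ, pieces i = T.mapEquiv σ)
    (hcover : basePolytope U = ⋃ i, basePolytope (pieces i))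
    (hfacet : ∀ i, affineSpan ℝ (basePolytope (pieces i)) = affineSpan ℝ (basePolytope U))
    (hcomplex : ∀ i j, i ≠ j → basePolytope (pieces i) ≠ basePolytope (pieces j) ∧
      IsExtreme ℝ (basePolytope (pieces i)) (basePolytope (pieces i) ∩ basePolytope (pieces j)) ∧
      IsExtreme ℝ (basePolytope (pieces j)) (basePolytope (pieces i) ∩ basePolytope (pieces j)))
    (hinter : ∀ J : Finset (Fin (k + 1)), J.Nonempty → ∃ N : Matroid ℕ,
      N.E = Set.Icc 1 n ∧ basePolytope N = ⋂ j ∈ J, basePolytope (pieces j))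
    (hinvariant : ∀ (N : Matroid ℕ) (σ : Equiv.Perm ℕ), f (N.mapEquiv σ) = f N)
    (hadditive : ∀ N : Matroid ℕ, (∃ A B, IsDirectSumDecomp N A B) → f N = 0)
    (hvaluative : ∀ g : Finset (Fin (k + 1)) → Matroid ℕ, g ∅ = U →
      (∀ J : Finset (Fin (k + 1)), J.Nonempty →
        basePolytope (g J) = ⋂ j ∈ J, basePolytope (pieces j)) →
      ∑ J : Finset (Fin (k + 1)), (-1 : ℤ) ^ J.card * f (g J) = 0) :
    f M = f U - k * f T := by
  classical
  -- the choice function for the valuativity hypothesis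
  set g : Finset (Fin (k + 1)) → Matroid ℕ := fun J =>
    if h : ∃ i, J = {i} then pieces h.choose
    else if hJ : J.Nonempty then (hinter J hJ).choose else U with hgdef
  have hgempty : g ∅ = U := by
    rw [hgdef]
    have h1 : ¬ ∃ i : Fin (k + 1), (∅ : Finset (Fin (k+1))) = {i} := by
      rintro ⟨i, hi⟩
      exact (Finset.singleton_ne_empty i) hi.symm
    simp [h1]
  have hgsingle : ∀ i : Fin (k + 1), g {i} = pieces i := by
    intro i
    have h1 : ∃ j : Fin (k + 1), ({i} : Finset (Fin (k+1))) = {j} := ⟨i, rfl⟩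
    rw [hgdef]
    simp only [h1, dif_pos]
    congr 1
    have := h1.choose_spec
    exact (Finset.singleton_injective this.symm)
  have hgspec : ∀ J : Finset (Fin (k + 1)), J.Nonempty →
      basePolytope (g J) = ⋂ j ∈ J, basePolytope (pieces j) := by
    intro J hJ
    by_cases h : ∃ i, J = {i}
    · obtain ⟨i, rfl⟩ := h
      rw [hgsingle i]
      simp
    · rw [hgdef]
      simp only [h, dif_neg, not_false_iff, hJ, dif_pos]
      exact (hinter J hJ).choose_spec.2
  -- ground sets of the chosen matroids
  have hgE : ∀ J : Finset (Fin (k + 1)), J.Nonempty → (g J).E = Set.Icc 1 n := by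
    intro J hJ
    by_cases h : ∃ i, J = {i}
    · obtain ⟨i, rfl⟩ := h
      rw [hgsingle i]; exact hpieceE i
    · rw [hgdef]
      simp only [h, dif_neg, not_false_iff, hJ, dif_pos]
      exact (hinter J hJ).choose_spec.1
  -- terms with at least two indices vanish
  have htwo : ∀ J : Finset (Fin (k + 1)), 1 < J.card → f (g J) = 0 := by
    intro J hJcard
    have hJne : J.Nonempty := Finset.card_pos.mp (by omega)
    obtain ⟨i, hi, j, hj, hij⟩ := Finset.one_lt_card.mp hJcard
    by_contra hf0
    have hno : ¬ ∃ A B, IsDirectSumDecomp (g J) A B := fun h => hf0 (hadditive _ h)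
    have hpoly := hgspec J hJne
    have hsubi : basePolytope (g J) ⊆ basePolytope (pieces i) := by
      rw [hpoly]; exact Set.biInter_subset_of_mem hi
    have hsubj : basePolytope (g J) ⊆ basePolytope (pieces j) := by
      rw [hpoly]; exact Set.biInter_subset_of_mem hj
    have hPU : basePolytope (pieces i) ⊆ basePolytope U := by
      rw [hcover]; exact Set.subset_iUnion (fun i => basePolytope (pieces i)) i
    exact (hcomplex i j hij).1 (sp_poly_eq n r U (g J)
      (basePolytope (pieces i)) (basePolytope (pieces j)) hUbase (hgE J hJne) hno
      hsubi hsubj hPU (hfacet i) (hfacet j) (hcomplex i j hij).2.1 (hcomplex i j hij).2.2)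
  -- evaluate the valuativity sum
  have hsum := hvaluative g hgempty hgspec
  set term : Finset (Fin (k + 1)) → ℤ := fun J => (-1 : ℤ) ^ J.card * f (g J) with hterm
  have hS1 : ∀ J : Finset (Fin (k + 1)),
      J ∉ insert (∅ : Finset (Fin (k+1))) (Finset.univ.image fun i => ({i} : Finset (Fin (k+1)))) →
      term J = 0 := by
    intro J hJ
    simp only [Finset.mem_insert, Finset.mem_image, Finset.mem_univ, true_and] at hJ
    push_neg at hJ
    obtain ⟨hJ1, hJ2⟩ := hJ
    have hcard : 1 < J.card := by
      rcases Nat.lt_or_ge J.card 2 with h | h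
      · interval_cases h' : J.card
        · exact absurd (Finset.card_eq_zero.mp h') hJ1.ne_empty
        · obtain ⟨i, hi⟩ := Finset.card_eq_one.mp h'
          exact absurd hi.symm (hJ2 i)
      · omega
    rw [hterm]
    simp [htwo J hcard]
  have hemptynotmem : (∅ : Finset (Fin (k+1))) ∉
      (Finset.univ.image fun i => ({i} : Finset (Fin (k+1)))) := by
    simp only [Finset.mem_image, Finset.mem_univ, true_and]
    push_neg
    exact fun i => Finset.singleton_nonempty i
  have hsum2 : ∑ J : Finset (Fin (k + 1)), term J =
      term ∅ + ∑ i : Fin (k + 1), term {i} := by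
    rw [← Finset.sum_subset (Finset.subset_univ
      (insert (∅ : Finset (Fin (k+1))) (Finset.univ.image fun i => ({i} : Finset (Fin (k+1))))))
      (fun J _ hJ => hS1 J hJ)]
    rw [Finset.sum_insert hemptynotmem]
    congr 1
    rw [Finset.sum_image (fun i _ j _ h => Finset.singleton_injective h)]
  have htermempty : term ∅ = f U := by rw [hterm]; simp [hgempty]
  have htermsingle : ∀ i, term {i} = - f (pieces i) := by
    intro i
    rw [hterm]
    simp [hgsingle i]
  have hpiecesum : ∑ i : Fin (k + 1), f (pieces i) = f M + k * f T := by
    rw [Fin.sum_univ_succ]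
    have h1 : ∀ i : Fin k, f (pieces i.succ) = f T := by
      intro i
      obtain ⟨σ, hσ⟩ := hpieceT i.succ (Fin.succ_ne_zero i)
      rw [hσ, hinvariant]
    rw [hpiece0]
    congr 1
    rw [Finset.sum_congr rfl (fun i _ => h1 i), Finset.sum_const, Finset.card_univ,
      Fintype.card_fin, nsmul_eq_mul]
  have hfinal : (0 : ℤ) = f U - (f M + k * f T) := by
    rw [← hsum, hsum2, htermempty]
    rw [Finset.sum_congr rfl (fun i _ => htermsingle i), Finset.sum_neg_distrib, hpiecesum]
    ring
  linarith [hfinal]
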